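/- In any feasible schedule of a job system, let s ≤ e be real numbers and let J be a job whose execution straddles s, i.e., s_J < s < s_J + B_J. Let D be the sum of the lengths B_j over all jobs j ≠ J with s ≤ r_j and d_j ≤ e. Then D + (min(s_J + B_J, e) − s) ≤ e − s; that is, the demand of [s, e] plus the portion of J's execution intruding into [s, e] cannot exceed the length of the interval. -/
import Mathlib


/-- In any feasible schedule of a job system, if the execution of a job `J`
straddles the left endpoint `s` of an interval `[s, e]` (i.e.
`sched J < s < sched J + B J`), then the demand `D` of `[s, e]`
(the sum of lengths of all other jobs released at or after `s` with deadline
at or before `e`) plus the portion `min (sched J + B J) e - s` of `J`'s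
execution intruding into `[s, e]` is at most the interval length `e - s`. -/
theorem demand_plus_intrusion_le_interval_length
    {ι : Type*} [Fintype ι] [DecidableEq ι]
    (r d B sched : ι → ℝ)
    (hB : ∀ j, 0 < B j)
    (hrel : ∀ j, r j ≤ sched j)
    (hdl : ∀ j, sched j + B j ≤ d j)
    (hdisj : ∀ j k, j ≠ k →
      Disjoint (Set.Ico (sched j) (sched j + B j))
               (Set.Ico (sched k) (sched k + B k)))
    (s e : ℝ) (hse : s ≤ e)
    (J : ι) (hJ1 : sched J < s) (hJ2 : s < sched J + B J)
    (D : ℝ)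
    (hD : D = ∑ j ∈ Finset.univ.filter (fun j => j ≠ J ∧ s ≤ r j ∧ d j ≤ e), B j) :
    D + (min (sched J + B J) e - s) ≤ e - s := by
  classical
  set F := Finset.univ.filter (fun j => j ≠ J ∧ s ≤ r j ∧ d j ≤ e) with hF
  -- each job in F starts at or after sched J + B J
  have hstart : ∀ j ∈ F, sched J + B J ≤ sched j := by
    intro j hj
    simp only [hF, Finset.mem_filter] at hj
    obtain ⟨-, hne, hsr, -⟩ := hj
    by_contra h
    push_neg at h
    have hjmem : sched j ∈ Set.Ico (sched j) (sched j + B j) :=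
      ⟨le_refl _, by linarith [hB j]⟩
    have hJmem : sched j ∈ Set.Ico (sched J) (sched J + B J) :=
      ⟨by linarith [hrel j], h⟩
    exact (hdisj j J hne).le_bot ⟨hjmem, hJmem⟩ |>.elim
  have hend : ∀ j ∈ F, sched j + B j ≤ e := by
    intro j hj
    simp only [hF, Finset.mem_filter] at hj
    exact le_trans (hdl j) hj.2.2.2
  by_cases hc : sched J + B J ≤ e
  · have hmin : min (sched J + B J) e = sched J + B J := min_eq_left hc
    set m := sched J + B J with hm
    have hsub : ∀ j ∈ F, Set.Ico (sched j) (sched j + B j) ⊆ Set.Icc m e := by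
      intro j hj x hx
      exact ⟨le_trans (hstart j hj) hx.1, le_trans (le_of_lt hx.2) (hend j hj)⟩
    have hpd : (↑F : Set ι).PairwiseDisjoint
        (fun j => Set.Ico (sched j) (sched j + B j)) := by
      intro a _ b _ hab
      exact hdisj a b hab
    have hmeas : ∀ j ∈ F, MeasurableSet (Set.Ico (sched j) (sched j + B j)) :=
      fun j _ => measurableSet_Ico
    have hvol : ∑ j ∈ F, MeasureTheory.volume (Set.Ico (sched j) (sched j + B j))
        = MeasureTheory.volume (⋃ j ∈ F, Set.Ico (sched j) (sched j + B j)) :=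
      (MeasureTheory.measure_biUnion_finset hpd hmeas).symm
    have hle : MeasureTheory.volume (⋃ j ∈ F, Set.Ico (sched j) (sched j + B j))
        ≤ MeasureTheory.volume (Set.Icc m e) := by
      apply MeasureTheory.measure_mono
      exact Set.iUnion₂_subset hsub
    have hsum : ∑ j ∈ F, ENNReal.ofReal (B j) ≤ ENNReal.ofReal (e - m) := by
      calc ∑ j ∈ F, ENNReal.ofReal (B j)
          = ∑ j ∈ F, MeasureTheory.volume (Set.Ico (sched j) (sched j + B j)) := by
            refine Finset.sum_congr rfl fun j _ => ?_
            rw [Real.volume_Ico]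
            ring_nf
        _ ≤ MeasureTheory.volume (Set.Icc m e) := hvol ▸ hle
        _ = ENNReal.ofReal (e - m) := Real.volume_Icc
    have hsum' : ENNReal.ofReal (∑ j ∈ F, B j) ≤ ENNReal.ofReal (e - m) := by
      rwa [ENNReal.ofReal_sum_of_nonneg (fun j _ => (hB j).le)]
    have hreal : ∑ j ∈ F, B j ≤ e - m := by
      have := (ENNReal.ofReal_le_ofReal_iff (by linarith)).mp hsum'
      exact this
    rw [hD, hmin]
    linarith
  · push_neg at hc
    have hmin : min (sched J + B J) e = e := min_eq_right hc.le
    have hFempty : F = ∅ := by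
      rw [Finset.eq_empty_iff_forall_notMem]
      intro j hj
      have h1 := hstart j hj
      have h2 := hend j hj
      have := hB j
      linarith
    rw [hD, hFempty, hmin]
    simp
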